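/- Suppose a sequence satisfies the Monteiro–Svaiter condition ‖y_{k+1} − (x̃_k − λ_{k+1}∇f(y_{k+1}))‖ ≤ ‖y_{k+1} − x̃_k‖ for all k, with x_k = −Σ_{i≤k} a_i ∇f(y_i), λ_k A_k = a_k², x̃_k = (a_{k+1}/A_{k+1}) x_k + (A_k/A_{k+1}) y_k, and f convex differentiable. Then for every x ∈ ℝ^d and k ≥ 1, f(y_k) − f(x) ≤ 2‖x‖² / (Σ_{i=1}^k sqrt(λ_i))². -/

import Mathlib

open scoped RealInnerProductSpace

theorem grad_convex_ineq' (d : ℕ) (f : EuclideanSpace ℝ (Fin d) → ℝ)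
    (hconv : ConvexOn ℝ Set.univ f) (hdiff : Differentiable ℝ f)
    (u v : EuclideanSpace ℝ (Fin d)) :
    ⟪v - u, gradient f u⟫ ≤ f v - f u := by
  set L : ℝ → EuclideanSpace ℝ (Fin d) :=
    fun t => (AffineMap.lineMap u v : ℝ →ᵃ[ℝ] _) t with hL
  have hL0 : L 0 = u := by simp [hL]
  have hL1 : L 1 = v := by simp [hL]
  have hline : HasDerivAt L (v - u) 0 := by
    simp only [hL, AffineMap.lineMap_apply_module]
    have h1 : HasDerivAt (fun t : ℝ => (1 - t) • u) (-u) 0 := by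
      simpa using (((hasDerivAt_const (0:ℝ) (1:ℝ)).sub (hasDerivAt_id 0)).smul_const u)
    have h2 : HasDerivAt (fun t : ℝ => t • v) v 0 := by
      simpa using ((hasDerivAt_id (0:ℝ)).smul_const v)
    rw [sub_eq_neg_add]; exact h1.add h2
  have hg : HasFDerivAt f (InnerProductSpace.toDual ℝ _ (gradient f u)) (L 0) := by
    rw [hL0]; exact (hdiff u).hasGradientAt
  have hcomp : HasDerivAt (f ∘ L) (⟪gradient f u, v - u⟫) 0 := by
    simpa [InnerProductSpace.toDual_apply_apply] using hg.comp_hasDerivAt 0 hline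
  have hcv : ConvexOn ℝ Set.univ (f ∘ L) := by
    have := hconv.comp_affineMap (AffineMap.lineMap u v)
    simpa [hL] using this
  have := hcv.le_slope_of_hasDerivAt (Set.mem_univ (0:ℝ)) (Set.mem_univ (1:ℝ)) one_pos hcomp
  rw [slope_def_field] at this
  simp only [Function.comp, hL0, hL1] at this
  rw [real_inner_comm]
  linarith [this]

set_option maxHeartbeats 2000000 in
/-- Monteiro–Svaiter framework: under the implicit-gradient condition, the rate
`f (y k) - f x ≤ 2‖x‖² / (∑_{i=1}^k sqrt (λ i))²` holds. -/
theorem monteiro_svaiter_rate (d : ℕ) (f : EuclideanSpace ℝ (Fin d) → ℝ)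
    (hconv : ConvexOn ℝ Set.univ f) (hdiff : Differentiable ℝ f)
    (lam a A : ℕ → ℝ)
    (hlam : ∀ k, 1 ≤ k → 0 < lam k) (ha : ∀ k, 1 ≤ k → 0 < a k)
    (hA : ∀ k, A k = ∑ i ∈ Finset.Icc 1 k, a i)
    (hlamA : ∀ k, 1 ≤ k → lam k * A k = (a k) ^ 2)
    (y x xt : ℕ → EuclideanSpace ℝ (Fin d))
    (hx : ∀ k, x k = -∑ i ∈ Finset.Icc 1 k, a i • gradient f (y i))
    (hxt : ∀ k, xt k = (a (k + 1) / A (k + 1)) • x k + (A k / A (k + 1)) • y k)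
    (hMS : ∀ k, ‖y (k + 1) - (xt k - lam (k + 1) • gradient f (y (k + 1)))‖ ≤
      ‖y (k + 1) - xt k‖) :
    ∀ (w : EuclideanSpace ℝ (Fin d)) (k : ℕ), 1 ≤ k →
      f (y k) - f w ≤ 2 * ‖w‖ ^ 2 / (∑ i ∈ Finset.Icc 1 k, Real.sqrt (lam i)) ^ 2 := by
  intro w k hk
  -- basic facts about A
  have hAnn : ∀ k, 0 ≤ A k := by
    intro k; rw [hA]
    exact Finset.sum_nonneg fun i hi => (ha i (Finset.mem_Icc.mp hi).1).le
  have hAsucc : ∀ k, A (k + 1) = A k + a (k + 1) := by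
    intro k; rw [hA, hA, Finset.sum_Icc_succ_top (by omega : 1 ≤ k + 1)]
  have hApos : ∀ k, 1 ≤ k → 0 < A k := by
    intro k hk
    obtain ⟨m, rfl⟩ := Nat.exists_eq_add_of_le hk
    rw [add_comm] at *
    rw [hAsucc]
    exact add_pos_of_nonneg_of_pos (hAnn m) (ha _ (by omega))
  -- the potential
  set Φ : ℕ → ℝ := fun k => A k * (f (y k) - f w) + ‖x k - w‖ ^ 2 / 2 with hΦ
  -- one-step decrease
  have key : ∀ k, Φ (k + 1) ≤ Φ k := by
    intro k
    set g := gradient f (y (k + 1)) with hg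
    have hapos : 0 < a (k + 1) := ha _ (by omega)
    have hA1pos : 0 < A (k + 1) := hApos _ (by omega)
    have hlampos : 0 < lam (k + 1) := hlam _ (by omega)
    have haa : (a (k + 1)) ^ 2 = lam (k + 1) * A (k + 1) := (hlamA _ (by omega)).symm
    have hx1 : x (k + 1) = x k - a (k + 1) • g := by
      rw [hx, hx, Finset.sum_Icc_succ_top (by omega : 1 ≤ k + 1), neg_add]
      rfl
    -- scalar abbreviations
    set α := ⟪x k, g⟫ with hα
    set β := ⟪y k, g⟫ with hβ
    set γ := ⟪y (k + 1), g⟫ with hγ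
    set δ := ⟪w, g⟫ with hδ
    set G := ‖g‖ ^ 2 with hG
    -- convexity inequalities
    have hc1 : δ - γ ≤ f w - f (y (k + 1)) := by
      have := grad_convex_ineq' d f hconv hdiff (y (k + 1)) w
      rwa [inner_sub_left] at this
    have hc2 : β - γ ≤ f (y k) - f (y (k + 1)) := by
      have := grad_convex_ineq' d f hconv hdiff (y (k + 1)) (y k)
      rwa [inner_sub_left] at this
    -- MS condition, scalar form
    have hms : A (k + 1) * γ - (a (k + 1) * α + A k * β) ≤ -((a (k + 1)) ^ 2 / 2) * G := by
      have hrw : y (k + 1) - (xt k - lam (k + 1) • g) =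
          (y (k + 1) - xt k) + lam (k + 1) • g := by abel
      have hsq : ‖(y (k + 1) - xt k) + lam (k + 1) • g‖ ^ 2 ≤ ‖y (k + 1) - xt k‖ ^ 2 := by
        have h := hMS k
        rw [hrw] at h
        exact pow_le_pow_left₀ (norm_nonneg _) h 2
      rw [norm_add_sq_real, norm_smul, Real.norm_eq_abs, abs_of_pos hlampos, mul_pow,
        inner_smul_right] at hsq
      have hip : ⟪y (k + 1) - xt k, g⟫ = γ - ((a (k + 1) / A (k + 1)) * α +
          (A k / A (k + 1)) * β) := by
        rw [inner_sub_left, hxt, inner_add_left, real_inner_smul_left, real_inner_smul_left]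
      rw [hip] at hsq
      -- from hsq : ‖p‖² + 2 λ (γ - ...) + λ² G ≤ ‖p‖²
      have h2 : lam (k + 1) * (γ - ((a (k + 1) / A (k + 1)) * α +
          (A k / A (k + 1)) * β)) ≤ -(lam (k + 1) ^ 2 / 2) * G := by nlinarith
      have h3 : γ - ((a (k + 1) / A (k + 1)) * α + (A k / A (k + 1)) * β) ≤
          -(lam (k + 1) / 2) * G := by
        rw [← mul_le_mul_iff_right₀ hlampos]; nlinarith
      have h4 := mul_le_mul_of_nonneg_left h3 hA1pos.le
      calc A (k + 1) * γ - (a (k + 1) * α + A k * β)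
          = A (k + 1) * (γ - ((a (k + 1) / A (k + 1)) * α + (A k / A (k + 1)) * β)) := by
            field_simp
        _ ≤ A (k + 1) * (-(lam (k + 1) / 2) * G) := h4
        _ = -((a (k + 1)) ^ 2 / 2) * G := by rw [haa]; ring
    -- norm expansion
    have hN : ‖x (k + 1) - w‖ ^ 2 = ‖x k - w‖ ^ 2 - 2 * (a (k + 1) * (α - δ)) +
        (a (k + 1)) ^ 2 * G := by
      have : x (k + 1) - w = (x k - w) - a (k + 1) • g := by rw [hx1]; abel
      rw [this, norm_sub_sq_real, inner_smul_right, inner_sub_left, norm_smul,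
        Real.norm_eq_abs, abs_of_pos hapos, mul_pow]
    -- combine
    have e1 := mul_le_mul_of_nonneg_left hc2 (hAnn k)
    have e2 := mul_le_mul_of_nonneg_left hc1 hapos.le
    rw [hAsucc k] at hms
    simp only [hΦ]
    rw [hN, hAsucc]
    linarith [e1, e2, hms]
  -- telescoping
  have mono : ∀ k, Φ k ≤ Φ 0 := by
    intro k
    induction k with
    | zero => exact le_refl _
    | succ n ih => exact (key n).trans ih
  have hΦ0 : Φ 0 = ‖w‖ ^ 2 / 2 := by
    simp only [hΦ]
    rw [hA, hx]
    simp
  have hbound : A k * (f (y k) - f w) ≤ ‖w‖ ^ 2 / 2 := by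
    have := (mono k).trans_eq hΦ0
    have hnn : 0 ≤ ‖x k - w‖ ^ 2 / 2 := by positivity
    simp only [hΦ] at this
    linarith
  -- sqrt part: ∑ √λ ≤ 2 √(A k)
  have hsum : ∀ k, (∑ i ∈ Finset.Icc 1 k, Real.sqrt (lam i)) ≤ 2 * Real.sqrt (A k) := by
    intro m
    induction m with
    | zero => simp
    | succ n ih =>
      rw [Finset.sum_Icc_succ_top (by omega : 1 ≤ n + 1)]
      have hapos : 0 < a (n + 1) := ha _ (by omega)
      have hA1pos : 0 < A (n + 1) := hApos _ (by omega)
      have hlampos : 0 < lam (n + 1) := hlam _ (by omega)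
      set s0 := Real.sqrt (A n) with hs0
      set s1 := Real.sqrt (A (n + 1)) with hs1
      have hs0sq : s0 ^ 2 = A n := Real.sq_sqrt (hAnn n)
      have hs1sq : s1 ^ 2 = A (n + 1) := Real.sq_sqrt hA1pos.le
      have hs0nn : 0 ≤ s0 := Real.sqrt_nonneg _
      have hs1pos : 0 < s1 := Real.sqrt_pos.mpr hA1pos
      have hlamval : Real.sqrt (lam (n + 1)) = a (n + 1) / s1 := by
        rw [show lam (n + 1) = (a (n + 1) / s1) ^ 2 by
          rw [div_pow, hs1sq]
          field_simp
          linarith [hlamA (n + 1) (by omega)]]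
        exact Real.sqrt_sq (by positivity)
      rw [hlamval]
      have hstep : a (n + 1) / s1 ≤ 2 * s1 - 2 * s0 := by
        rw [div_le_iff₀ hs1pos]
        have hAs : a (n + 1) = s1 ^ 2 - s0 ^ 2 := by
          rw [hs0sq, hs1sq, hAsucc]; ring
        nlinarith [sq_nonneg (s1 - s0)]
      linarith
  -- finish
  have hS : 0 < ∑ i ∈ Finset.Icc 1 k, Real.sqrt (lam i) := by
    apply Finset.sum_pos
    · intro i hi
      exact Real.sqrt_pos.mpr (hlam i (Finset.mem_Icc.mp hi).1)
    · exact ⟨1, Finset.mem_Icc.mpr ⟨le_refl 1, hk⟩⟩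
  set S := ∑ i ∈ Finset.Icc 1 k, Real.sqrt (lam i) with hSdef
  have hS4 : S ^ 2 ≤ 4 * A k := by
    have h := hsum k
    have : S ^ 2 ≤ (2 * Real.sqrt (A k)) ^ 2 := by nlinarith
    calc S ^ 2 ≤ (2 * Real.sqrt (A k)) ^ 2 := this
      _ = 4 * A k := by rw [mul_pow, Real.sq_sqrt (hAnn k)]; ring
  have hAkpos : 0 < A k := hApos k hk
  have h1 : f (y k) - f w ≤ ‖w‖ ^ 2 / (2 * A k) := by
    rw [le_div_iff₀ (mul_pos two_pos hAkpos)]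
    linarith [hbound]
  have h2 : ‖w‖ ^ 2 / (2 * A k) ≤ 2 * ‖w‖ ^ 2 / S ^ 2 := by
    rw [div_le_div_iff₀ (mul_pos two_pos hAkpos) (pow_pos hS 2)]
    have := mul_le_mul_of_nonneg_left hS4 (sq_nonneg ‖w‖)
    linarith
  linarith
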